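/- Let f ∈ ℚ⟨⟨e₀,e₁⟩⟩ with f[∅]=1 be such that f^{-1}e₁f is primitive for the shuffle coproduct (Δ_sh(f^{-1}e₁f) = f^{-1}e₁f ⊗ 1 + 1 ⊗ f^{-1}e₁f) and such that f[e₁^s] = 0 for all s ≥ 1. Then f is grouplike: Δ_sh(f) = f ⊗ f. -/

import Mathlib

open Finset

/-- The multiset of shuffles of two words on {e₀,e₁} (`false` = e₀,
`true` = e₁). -/
def shuffles : List Bool → List Bool → Multiset (List Bool)
  | [], ys => {ys}
  | x :: xs, [] => {x :: xs}
  | x :: xs, y :: ys =>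
      (shuffles xs (y :: ys)).map (x :: ·) + (shuffles (x :: xs) ys).map (y :: ·)
  termination_by xs ys => xs.length + ys.length

/-- Concatenation (convolution) product on ℚ⟨⟨e₀,e₁⟩⟩, where a series is a
family of coefficients indexed by words. -/
noncomputable def conv (a b : List Bool → ℚ) : List Bool → ℚ :=
  fun w => ∑ i ∈ Finset.range (w.length + 1), a (w.take i) * b (w.drop i)

/-- The series e₁. -/
noncomputable def E1 : List Bool → ℚ := fun w => if w = [true] then 1 else 0

namespace P18

lemma map_finsum {ι α β : Type*} (s : Finset ι) (f : ι → Multiset α) (g : α → β) :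
    (∑ i ∈ s, f i).map g = ∑ i ∈ s, (f i).map g := by
  rw [← Multiset.coe_mapAddMonoidHom, map_sum]

def bindHom {α β : Type*} (g : α → Multiset β) : Multiset α →+ Multiset β where
  toFun := fun m => m.bind g
  map_zero' := Multiset.zero_bind g
  map_add' := fun a b => Multiset.add_bind a b g

lemma bind_finsum {ι α β : Type*} (s : Finset ι) (f : ι → Multiset α) (g : α → Multiset β) :
    (∑ i ∈ s, f i).bind g = ∑ i ∈ s, (f i).bind g := map_sum (bindHom g) f s

def splits (s : List Bool) : Multiset (List Bool × List Bool) :=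
  ↑((List.range (s.length + 1)).map (fun k => (s.take k, s.drop k)))

lemma shuffles_cons_cons (x y : Bool) (xs ys : List Bool) :
    shuffles (x::xs) (y::ys)
      = (shuffles xs (y::ys)).map (x :: ·) + (shuffles (x::xs) ys).map (y :: ·) := by
  simp [shuffles]

lemma shuffles_nil_right (p : List Bool) : shuffles p [] = {p} := by
  cases p <;> simp [shuffles]

lemma shuffles_nil_left (p : List Bool) : shuffles [] p = {p} := by
  simp [shuffles]

lemma coe_range_map_eq_sum {α : Type*} (n : ℕ) (f : ℕ → α) :
    (↑((List.range n).map f) : Multiset α) = ∑ k ∈ range n, ({f k} : Multiset α) := by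
  induction n with
  | zero => simp
  | succ n ih =>
    rw [List.range_succ, Finset.sum_range_succ, ← ih, List.map_append]
    simp [← Multiset.coe_add, ← Multiset.coe_singleton]

lemma splits_eq_sum (s : List Bool) :
    splits s = ∑ k ∈ range (s.length + 1), ({(s.take k, s.drop k)} : Multiset _) :=
  coe_range_map_eq_sum _ _

lemma splits_cons (z : Bool) (s : List Bool) :
    splits (z :: s) = ([], z :: s) ::ₘ (splits s).map (fun pq => (z :: pq.1, pq.2)) := by
  unfold splits
  rw [List.length_cons, List.range_succ_eq_map, List.map_cons, ← Multiset.cons_coe]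
  congr 1
  · rw [Multiset.map_coe, List.map_map]
    rw [List.map_map]
    exact congrArg _ (List.map_congr_left fun k _ => by simp)

/-- The key bijection: splittings of shuffles of (w,w') correspond to pairs of
shuffles of complementary splittings. -/
lemma shuffles_splits (w w' : List Bool) :
    (shuffles w w').bind splits
      = ∑ i ∈ range (w.length + 1), ∑ j ∈ range (w'.length + 1),
          (shuffles (w.take i) (w'.take j)).bind
            (fun p => (shuffles (w.drop i) (w'.drop j)).map (fun q => (p, q))) := by
  induction w, w' using shuffles.induct with
  | case1 ys =>
    rw [shuffles_nil_left, Multiset.singleton_bind, splits_eq_sum]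
    simp only [List.length_nil, zero_add, Finset.sum_range_one, List.take_nil, List.drop_nil]
    refine Finset.sum_congr rfl fun j hj => ?_
    rw [shuffles_nil_left, Multiset.singleton_bind, shuffles_nil_left, Multiset.map_singleton]
  | case2 x xs =>
    rw [shuffles_nil_right, Multiset.singleton_bind, splits_eq_sum]
    simp only [List.length_nil, zero_add, Finset.sum_range_one, List.take_nil, List.drop_nil]
    refine Finset.sum_congr rfl fun i hi => ?_
    rw [shuffles_nil_right, Multiset.singleton_bind, shuffles_nil_right, Multiset.map_singleton]
  | case3 x xs y ys ih1 ih2 =>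
    rw [shuffles_cons_cons, Multiset.add_bind, Multiset.bind_map, Multiset.bind_map]
    simp only [splits_cons, Multiset.bind_cons, ← Multiset.map_bind]
    rw [ih1, ih2]
    have hX : Multiset.map (fun pq => (x :: pq.1, pq.2))
          (∑ i ∈ Finset.range (xs.length + 1), ∑ j ∈ Finset.range ((y :: ys).length + 1),
            (shuffles (List.take i xs) (List.take j (y :: ys))).bind fun p =>
              Multiset.map (fun q => (p, q)) (shuffles (List.drop i xs) (List.drop j (y :: ys))))
        = (∑ i ∈ Finset.range (xs.length + 1), ∑ j ∈ Finset.range (ys.length + 1),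
            (shuffles (List.take i xs) (y :: List.take j ys)).bind fun p =>
              Multiset.map (fun q => (x :: p, q)) (shuffles (List.drop i xs) (List.drop j ys)))
          + ∑ i ∈ Finset.range (xs.length + 1),
              Multiset.map (fun q => (x :: List.take i xs, q))
                (shuffles (List.drop i xs) (y :: ys)) := by
      rw [map_finsum, ← Finset.sum_add_distrib]
      refine Finset.sum_congr rfl fun i _ => ?_
      rw [map_finsum, List.length_cons, Finset.sum_range_succ']
      congr 1
      · refine Finset.sum_congr rfl fun j _ => ?_
        rw [Multiset.map_bind]
        simp [Multiset.map_map, Function.comp]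
      · simp [shuffles_nil_right, Multiset.singleton_bind, Multiset.map_map, Function.comp]
    have hY : Multiset.map (fun pq => (y :: pq.1, pq.2))
          (∑ i ∈ Finset.range ((x :: xs).length + 1), ∑ j ∈ Finset.range (ys.length + 1),
            (shuffles (List.take i (x :: xs)) (List.take j ys)).bind fun p =>
              Multiset.map (fun q => (p, q)) (shuffles (List.drop i (x :: xs)) (List.drop j ys)))
        = (∑ i ∈ Finset.range (xs.length + 1), ∑ j ∈ Finset.range (ys.length + 1),
            (shuffles (x :: List.take i xs) (List.take j ys)).bind fun p =>
              Multiset.map (fun q => (y :: p, q)) (shuffles (List.drop i xs) (List.drop j ys)))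
          + ∑ j ∈ Finset.range (ys.length + 1),
              Multiset.map (fun q => (y :: List.take j ys, q))
                (shuffles (x :: xs) (List.drop j ys)) := by
      rw [List.length_cons, map_finsum, Finset.sum_range_succ']
      congr 1
      · refine Finset.sum_congr rfl fun i _ => ?_
        rw [map_finsum]
        refine Finset.sum_congr rfl fun j _ => ?_
        rw [Multiset.map_bind]
        simp [Multiset.map_map, Function.comp]
      · rw [map_finsum]
        refine Finset.sum_congr rfl fun j _ => ?_
        simp [shuffles_nil_left, Multiset.singleton_bind, Multiset.map_map, Function.comp]
    have hR : (∑ i ∈ Finset.range ((x :: xs).length + 1),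
          ∑ j ∈ Finset.range ((y :: ys).length + 1),
            (shuffles (List.take i (x :: xs)) (List.take j (y :: ys))).bind fun p =>
              Multiset.map (fun q => (p, q))
                (shuffles (List.drop i (x :: xs)) (List.drop j (y :: ys))))
        = ((∑ i ∈ Finset.range (xs.length + 1), ∑ j ∈ Finset.range (ys.length + 1),
              (shuffles (List.take i xs) (y :: List.take j ys)).bind fun p =>
                Multiset.map (fun q => (x :: p, q)) (shuffles (List.drop i xs) (List.drop j ys)))
            + (∑ i ∈ Finset.range (xs.length + 1), ∑ j ∈ Finset.range (ys.length + 1),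
              (shuffles (x :: List.take i xs) (List.take j ys)).bind fun p =>
                Multiset.map (fun q => (y :: p, q)) (shuffles (List.drop i xs) (List.drop j ys)))
            + ∑ i ∈ Finset.range (xs.length + 1),
              Multiset.map (fun q => (x :: List.take i xs, q))
                (shuffles (List.drop i xs) (y :: ys)))
          + ((∑ j ∈ Finset.range (ys.length + 1),
              Multiset.map (fun q => (y :: List.take j ys, q))
                (shuffles (x :: xs) (List.drop j ys)))
            + Multiset.map (fun q => (([] : List Bool), q)) (shuffles (x :: xs) (y :: ys))) := by
      rw [List.length_cons, Finset.sum_range_succ']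
      congr 1
      · have step : ∀ i ∈ Finset.range (xs.length + 1),
            (∑ j ∈ Finset.range ((y :: ys).length + 1),
              (shuffles (List.take (i+1) (x :: xs)) (List.take j (y :: ys))).bind fun p =>
                Multiset.map (fun q => (p, q))
                  (shuffles (List.drop (i+1) (x :: xs)) (List.drop j (y :: ys))))
            = (∑ j ∈ Finset.range (ys.length + 1),
                (((shuffles (List.take i xs) (y :: List.take j ys)).bind fun p =>
                  Multiset.map (fun q => (x :: p, q))
                    (shuffles (List.drop i xs) (List.drop j ys)))
                + ((shuffles (x :: List.take i xs) (List.take j ys)).bind fun p =>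
                  Multiset.map (fun q => (y :: p, q))
                    (shuffles (List.drop i xs) (List.drop j ys)))))
              + Multiset.map (fun q => (x :: List.take i xs, q))
                  (shuffles (List.drop i xs) (y :: ys)) := by
          intro i _
          rw [List.length_cons, Finset.sum_range_succ']
          congr 1
          · refine Finset.sum_congr rfl fun j _ => ?_
            simp only [List.take_succ_cons, List.drop_succ_cons]
            rw [shuffles_cons_cons, Multiset.add_bind, Multiset.bind_map, Multiset.bind_map]
          · simp [shuffles_nil_right, Multiset.singleton_bind, Multiset.map_map, Function.comp]
        rw [Finset.sum_congr rfl step]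
        simp only [Finset.sum_add_distrib]
      · rw [List.length_cons, Finset.sum_range_succ']
        congr 1
        · refine Finset.sum_congr rfl fun j _ => ?_
          simp [shuffles_nil_left, Multiset.singleton_bind, Multiset.map_map, Function.comp]
        · simp [shuffles_nil_left, Multiset.singleton_bind]
    rw [hX, hY, hR]
    have hA : Multiset.map (fun q => (([] : List Bool), q)) (shuffles (x :: xs) (y :: ys))
        = Multiset.map (fun a => (([] : List Bool), x :: a)) (shuffles xs (y :: ys))
          + Multiset.map (fun a => (([] : List Bool), y :: a)) (shuffles (x :: xs) ys) := by
      rw [shuffles_cons_cons, Multiset.map_add, Multiset.map_map, Multiset.map_map]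
      rfl
    rw [hA]
    abel

noncomputable section
variable {R : Type*} [Ring R]

def cF (a b : List Bool → R) : List Bool → R :=
  fun w => ∑ i ∈ Finset.range (w.length + 1), a (w.take i) * b (w.drop i)

def dF : List Bool → R := fun w => if w = [] then 1 else 0

lemma cF_assoc (a b c : List Bool → R) (w : List Bool) :
    cF (cF a b) c w = cF a (cF b c) w := by
  unfold cF
  have L : ∑ k ∈ range (w.length + 1),
      (∑ i ∈ Finset.range ((w.take k).length + 1),
        a ((w.take k).take i) * b ((w.take k).drop i)) * c (w.drop k)
      = ∑ k ∈ range (w.length + 1), ∑ i ∈ range (k+1),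
          a (w.take i) * b ((w.drop i).take (k - i)) * c (w.drop k) := by
    refine Finset.sum_congr rfl fun k hk => ?_
    rw [Finset.mem_range] at hk
    have hk' : k ≤ w.length := Nat.lt_succ_iff.mp hk
    rw [Finset.sum_mul]
    rw [List.length_take, Nat.min_eq_left hk']
    refine Finset.sum_congr rfl fun i hi => ?_
    rw [Finset.mem_range] at hi
    have hi' : i ≤ k := Nat.lt_succ_iff.mp hi
    rw [List.take_take, Nat.min_eq_left hi', List.drop_take]
  have Rr : ∑ i ∈ range (w.length + 1),
      a (w.take i) * ∑ j ∈ Finset.range ((w.drop i).length + 1),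
        b ((w.drop i).take j) * c ((w.drop i).drop j)
      = ∑ i ∈ range (w.length + 1), ∑ j ∈ range (w.length - i + 1),
          a (w.take i) * (b ((w.drop i).take j) * c (w.drop (i + j))) := by
    refine Finset.sum_congr rfl fun i hi => ?_
    rw [Finset.mul_sum, List.length_drop]
    refine Finset.sum_congr rfl fun j hj => ?_
    rw [List.drop_drop]
  rw [L, Rr]
  rw [Finset.sum_sigma' (range (w.length+1)) (fun k => range (k+1)),
      Finset.sum_sigma' (range (w.length+1)) (fun i => range (w.length - i + 1))]
  refine Finset.sum_nbij' (fun p => ⟨p.2, p.1 - p.2⟩) (fun p => ⟨p.1 + p.2, p.1⟩)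
    ?_ ?_ ?_ ?_ ?_
  · rintro ⟨k, i⟩ h
    simp only [Finset.mem_sigma, Finset.mem_range, Nat.lt_succ_iff] at h ⊢
    omega
  · rintro ⟨i, j⟩ h
    simp only [Finset.mem_sigma, Finset.mem_range, Nat.lt_succ_iff] at h ⊢
    omega
  · rintro ⟨k, i⟩ h
    simp only [Finset.mem_sigma, Finset.mem_range, Nat.lt_succ_iff] at h
    have h2 : i + (k - i) = k := by omega
    simp only [h2]
  · rintro ⟨i, j⟩ h
    simp only [Finset.mem_sigma, Finset.mem_range, Nat.lt_succ_iff] at h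
    have h2 : i + j - i = j := by omega
    simp only [h2]
  · rintro ⟨k, i⟩ h
    simp only [Finset.mem_sigma, Finset.mem_range, Nat.lt_succ_iff] at h
    have : i + (k - i) = k := by omega
    simp only [this, mul_assoc]

lemma dF_cF (a : List Bool → R) (w : List Bool) : cF dF a w = a w := by
  unfold cF dF
  rw [Finset.sum_eq_single 0]
  · simp
  · intro i hi hne
    rw [Finset.mem_range, Nat.lt_succ_iff] at hi
    have : w.take i ≠ [] := by
      cases w with
      | nil => simp at hi; omega
      | cons x xs =>
        cases i with
        | zero => exact absurd rfl hne
        | succ n => simp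
    simp [this]
  · intro h; simp at h

lemma cF_dF (a : List Bool → R) (w : List Bool) : cF a dF w = a w := by
  unfold cF dF
  rw [Finset.sum_eq_single w.length]
  · simp
  · intro i hi hne
    rw [Finset.mem_range, Nat.lt_succ_iff] at hi
    have : w.drop i ≠ [] := by
      intro h
      have := congrArg List.length h
      simp at this
      omega
    simp [this]
  · intro h; simp at h

lemma cF_add_left (a b c : List Bool → R) (w : List Bool) :
    cF (fun v => a v + b v) c w = cF a c w + cF b c w := by
  unfold cF; rw [← Finset.sum_add_distrib]
  exact Finset.sum_congr rfl fun i _ => add_mul _ _ _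

lemma cF_add_right (a b c : List Bool → R) (w : List Bool) :
    cF a (fun v => b v + c v) w = cF a b w + cF a c w := by
  unfold cF; rw [← Finset.sum_add_distrib]
  exact Finset.sum_congr rfl fun i _ => mul_add _ _ _

def Ser (R : Type*) := List Bool → R

instance : AddCommGroup (Ser R) := Pi.addCommGroup

lemma cF_zero_left (a : List Bool → R) (w : List Bool) : cF (fun _ => 0) a w = 0 := by
  unfold cF; simp

lemma cF_zero_right (a : List Bool → R) (w : List Bool) : cF a (fun _ => 0) w = 0 := by
  unfold cF; simp

instance : Ring (Ser R) :=
  { (inferInstance : AddCommGroup (Ser R)) with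
    mul := cF
    one := dF
    mul_assoc := fun a b c => funext (cF_assoc a b c)
    one_mul := fun a => funext (dF_cF a)
    mul_one := fun a => funext (cF_dF a)
    left_distrib := fun a b c => funext (cF_add_right a b c)
    right_distrib := fun a b c => funext (cF_add_left a b c)
    zero_mul := fun a => funext (cF_zero_left a)
    mul_zero := fun a => funext (cF_zero_right a) }

lemma Ser.mul_apply (a b : Ser R) (w : List Bool) :
    (a * b) w = ∑ i ∈ Finset.range (w.length + 1), a (w.take i) * b (w.drop i) := rfl

lemma Ser.one_apply (w : List Bool) : (1 : Ser R) w = if w = [] then 1 else 0 := rfl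

lemma Ser.add_apply (a b : Ser R) (w : List Bool) : (a + b) w = a w + b w := rfl
lemma Ser.zero_apply (w : List Bool) : (0 : Ser R) w = 0 := rfl

def Ser.eval (w : List Bool) : Ser R →+ R where
  toFun := fun a => a w
  map_zero' := rfl
  map_add' := fun _ _ => rfl

lemma Ser.sum_apply {ι : Type*} (s : Finset ι) (g : ι → Ser R) (w : List Bool) :
    (∑ i ∈ s, g i) w = ∑ i ∈ s, g i w := map_sum (Ser.eval w) g s

end
end P18

namespace P18
noncomputable section

def sumHom (R : Type*) [AddCommMonoid R] : Multiset R →+ R where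
  toFun := Multiset.sum
  map_zero' := rfl
  map_add' := fun a b => Multiset.sum_add a b

lemma sum_finsum {ι R : Type*} [AddCommMonoid R] (s : Finset ι) (g : ι → Multiset R) :
    (∑ i ∈ s, g i).sum = ∑ i ∈ s, (g i).sum := map_sum (sumHom R) g s

abbrev SQ := Ser ℚ
abbrev S2 := Ser (Ser ℚ)

def D (a : SQ) : S2 := fun w w' => ((shuffles w w').map a).sum

def tens (a b : SQ) : S2 := fun w w' => a w * b w'

lemma conv_eq_mul (a b : SQ) : conv a b = a * b := rfl

lemma S2.mul_apply (A B : S2) (w w' : List Bool) :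
    (A * B) w w' = ∑ i ∈ range (w.length + 1), ∑ j ∈ range (w'.length + 1),
      A (w.take i) (w'.take j) * B (w.drop i) (w'.drop j) := by
  have h : (A * B) w = ∑ i ∈ range (w.length + 1), A (w.take i) * B (w.drop i) :=
    Ser.mul_apply A B w
  rw [h, Ser.sum_apply]
  exact Finset.sum_congr rfl fun i _ => Ser.mul_apply _ _ _

lemma conv_splits (a b : SQ) (s : List Bool) :
    (a * b : SQ) s = ((splits s).map (fun pq => a pq.1 * b pq.2)).sum := by
  rw [Ser.mul_apply, splits_eq_sum, map_finsum, sum_finsum]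
  exact Finset.sum_congr rfl fun k _ => by simp

lemma D_mul (a b : SQ) : D (a * b) = D a * D b := by
  funext w w'
  rw [S2.mul_apply]
  have h1 : D (a * b) w w'
      = (((shuffles w w').bind splits).map (fun pq => a pq.1 * b pq.2)).sum := by
    unfold D
    rw [Multiset.map_bind, Multiset.sum_bind]
    congr 1
    exact Multiset.map_congr rfl fun s _ => conv_splits a b s
  rw [h1, shuffles_splits, map_finsum, sum_finsum]
  refine Finset.sum_congr rfl fun i _ => ?_
  rw [map_finsum, sum_finsum]
  refine Finset.sum_congr rfl fun j _ => ?_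
  rw [Multiset.map_bind, Multiset.sum_bind]
  unfold D
  erw [← Multiset.sum_map_mul_right]
  refine congrArg Multiset.sum (Multiset.map_congr rfl fun p _ => ?_)
  erw [Multiset.map_map, ← Multiset.sum_map_mul_left]
  exact congrArg Multiset.sum (Multiset.map_congr rfl fun q _ => rfl)

def Ee : S2 := tens E1 1 + tens 1 E1

lemma Ee_apply (w w' : List Bool) :
    Ee w w' = E1 w * (if w' = [] then 1 else 0) + (if w = [] then 1 else 0) * E1 w' := rfl

lemma length_of_mem_shuffles :
    ∀ w w' : List Bool, ∀ s ∈ shuffles w w', s.length = w.length + w'.length := by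
  intro w w'
  induction w, w' using shuffles.induct with
  | case1 ys => intro s hs; simp [shuffles] at hs; simp [hs]
  | case2 x xs => intro s hs; simp [shuffles] at hs; simp [hs]
  | case3 x xs y ys ih1 ih2 =>
    intro s hs
    rw [shuffles_cons_cons, Multiset.mem_add] at hs
    rcases hs with hs | hs <;> rw [Multiset.mem_map] at hs <;>
      obtain ⟨t, ht, rfl⟩ := hs
    · have := ih1 t ht; simp [this]; omega
    · have := ih2 t ht; simp [this]; omega

lemma true_of_mem_shuffles :
    ∀ w w' : List Bool, ∀ s ∈ shuffles w w', (∀ z ∈ w, z = true) → (∀ z ∈ w', z = true) →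
      ∀ z ∈ s, z = true := by
  intro w w'
  induction w, w' using shuffles.induct with
  | case1 ys => intro s hs h1 h2; simp [shuffles] at hs; subst hs; exact h2
  | case2 x xs => intro s hs h1 h2; simp [shuffles] at hs; subst hs; exact h1
  | case3 x xs y ys ih1 ih2 =>
    intro s hs h1 h2
    rw [shuffles_cons_cons, Multiset.mem_add] at hs
    rcases hs with hs | hs <;> rw [Multiset.mem_map] at hs <;>
      obtain ⟨t, ht, rfl⟩ := hs
    · intro z hz
      rcases List.mem_cons.mp hz with rfl | hz
      · exact h1 _ (by simp)
      · exact ih1 t ht (fun z hz => h1 z (by simp [hz])) h2 z hz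
    · intro z hz
      rcases List.mem_cons.mp hz with rfl | hz
      · exact h2 _ (by simp)
      · exact ih2 t ht h1 (fun z hz => h2 z (by simp [hz])) z hz

lemma D_E1 : D E1 = Ee := by
  funext w w'
  rw [Ee_apply]
  unfold D
  match w, w' with
  | [], w' =>
    rw [shuffles_nil_left]
    simp [E1]
  | w, [] =>
    rw [shuffles_nil_right]
    simp [E1]
  | x :: xs, y :: ys =>
    have hz : ∀ s ∈ shuffles (x :: xs) (y :: ys), E1 s = 0 := by
      intro s hs
      have hl := length_of_mem_shuffles _ _ s hs
      simp only [List.length_cons] at hl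
      have : s ≠ [true] := by
        intro h; rw [h] at hl; simp at hl; omega
      simp [E1, this]
    rw [Multiset.sum_eq_zero]
    · simp [E1]
    · intro z hz'
      rw [Multiset.mem_map] at hz'
      obtain ⟨s, hs, rfl⟩ := hz'
      exact hz s hs

end
end P18


namespace P18
noncomputable section

lemma sum_dF_right (g : List Bool → ℚ) (w : List Bool) :
    ∑ j ∈ range (w.length + 1), g (w.take j) * (if w.drop j = [] then (1:ℚ) else 0)
      = g w := by
  rw [Finset.sum_eq_single w.length]
  · simp
  · intro j hj hne
    rw [Finset.mem_range, Nat.lt_succ_iff] at hj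
    have : w.drop j ≠ [] := by
      intro h
      have := congrArg List.length h
      simp at this
      omega
    simp [this]
  · intro h; simp at h

lemma sum_dF_left (g : List Bool → ℚ) (w : List Bool) :
    ∑ i ∈ range (w.length + 1), (if w.take i = [] then (1:ℚ) else 0) * g (w.drop i)
      = g w := by
  rw [Finset.sum_eq_single 0]
  · simp
  · intro i hi hne
    rw [Finset.mem_range, Nat.lt_succ_iff] at hi
    have : w.take i ≠ [] := by
      intro h
      rcases List.take_eq_nil_iff.mp h with h | h
      · exact hne h
      · rw [h] at hi
        simp at hi
        exact hne hi
    simp [this]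
  · intro h; simp at h

lemma sum_E1_right (g : List Bool → ℚ) (w : List Bool) :
    ∑ i ∈ range (w.length + 1), g (w.take i) * E1 (w.drop i)
      = match w.getLast? with | some true => g w.dropLast | _ => 0 := by
  rcases List.eq_nil_or_concat w with rfl | ⟨v, b, rfl⟩
  · simp [E1]
  · rw [List.concat_eq_append, List.getLast?_concat, List.dropLast_concat]
    cases b
    · have hz : ∀ i ∈ range ((v ++ [false]).length + 1),
          g ((v ++ [false]).take i) * E1 ((v ++ [false]).drop i) = 0 := by
        intro i hi
        rw [Finset.mem_range, Nat.lt_succ_iff, List.length_append] at hi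
        have : (v ++ [false]).drop i ≠ [true] := by
          intro h
          rcases le_or_gt i v.length with hle | hlt
          · rw [List.drop_append_of_le_length hle] at h
            have := congrArg List.getLast? h
            rw [List.getLast?_concat] at this
            simp at this
          · have h2 := congrArg List.length h
            simp at h2
            omega
        simp [E1, this]
      rw [Finset.sum_eq_zero hz]
    · rw [Finset.sum_eq_single v.length]
      · rw [List.take_left, List.drop_left]
        simp [E1]
      · intro i hi hne
        rw [Finset.mem_range, Nat.lt_succ_iff, List.length_append] at hi
        have : (v ++ [true]).drop i ≠ [true] := by
          intro h
          have h2 := congrArg List.length h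
          simp at h2
          omega
        simp [E1, this]
      · intro h
        rw [Finset.mem_range, List.length_append] at h
        simp at h

lemma sum_E1_left (g : List Bool → ℚ) (w : List Bool) :
    ∑ i ∈ range (w.length + 1), E1 (w.take i) * g (w.drop i)
      = match w.head? with | some true => g w.tail | _ => 0 := by
  cases w with
  | nil => simp [E1]
  | cons a v =>
    cases a
    · have hz : ∀ i ∈ range ((false :: v).length + 1),
          E1 ((false :: v).take i) * g ((false :: v).drop i) = 0 := by
        intro i hi
        have : (false :: v).take i ≠ [true] := by
          cases i with
          | zero => simp
          | succ n =>
            rw [List.take_succ_cons]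
            intro h
            have := List.head_eq_of_cons_eq h
            simp at this
        simp [E1, this]
      rw [Finset.sum_eq_zero hz]
      rfl
    · rw [Finset.sum_eq_single 1]
      · simp [E1]
      · intro i hi hne
        rw [Finset.mem_range, Nat.lt_succ_iff, List.length_cons] at hi
        have : (true :: v).take i ≠ [true] := by
          intro h
          have h2 := congrArg List.length h
          rw [List.length_take] at h2
          simp at h2
          omega
        simp [E1, this]
      · intro h
        simp at h

lemma mul_Ee (A : S2) (w w' : List Bool) :
    (A * Ee) w w'
      = (match w.getLast? with | some true => A w.dropLast w' | _ => 0)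
        + (match w'.getLast? with | some true => A w w'.dropLast | _ => 0) := by
  rw [S2.mul_apply]
  have hsplit : ∀ i ∈ range (w.length + 1), ∀ j ∈ range (w'.length + 1),
      A (w.take i) (w'.take j) * Ee (w.drop i) (w'.drop j)
        = A (w.take i) (w'.take j) * (if w'.drop j = [] then (1:ℚ) else 0) * E1 (w.drop i)
          + A (w.take i) (w'.take j) * E1 (w'.drop j) * (if w.drop i = [] then (1:ℚ) else 0) := by
    intro i _ j _
    rw [Ee_apply]
    ring
  rw [Finset.sum_congr rfl fun i hi => Finset.sum_congr rfl fun j hj => hsplit i hi j hj]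
  simp only [Finset.sum_add_distrib]
  congr 1
  · have h1 : ∀ i ∈ range (w.length + 1),
        ∑ j ∈ range (w'.length + 1),
          A (w.take i) (w'.take j) * (if w'.drop j = [] then (1:ℚ) else 0) * E1 (w.drop i)
        = A (w.take i) w' * E1 (w.drop i) := by
      intro i _
      rw [← Finset.sum_mul]
      rw [sum_dF_right (fun v => A (w.take i) v) w']
    rw [Finset.sum_congr rfl h1, sum_E1_right (fun v => A v w') w]
  · have h1 : ∀ i ∈ range (w.length + 1),
        ∑ j ∈ range (w'.length + 1),
          A (w.take i) (w'.take j) * E1 (w'.drop j) * (if w.drop i = [] then (1:ℚ) else 0)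
        = (fun v => ∑ j ∈ range (w'.length + 1), A v (w'.take j) * E1 (w'.drop j)) (w.take i)
            * (if w.drop i = [] then (1:ℚ) else 0) := by
      intro i _
      rw [Finset.sum_mul]
    rw [Finset.sum_congr rfl h1,
      sum_dF_right (fun v => ∑ j ∈ range (w'.length + 1), A v (w'.take j) * E1 (w'.drop j)) w,
      sum_E1_right (fun v => A w v) w']

lemma Ee_mul (A : S2) (w w' : List Bool) :
    (Ee * A) w w'
      = (match w.head? with | some true => A w.tail w' | _ => 0)
        + (match w'.head? with | some true => A w w'.tail | _ => 0) := by
  rw [S2.mul_apply]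
  have hsplit : ∀ i ∈ range (w.length + 1), ∀ j ∈ range (w'.length + 1),
      Ee (w.take i) (w'.take j) * A (w.drop i) (w'.drop j)
        = E1 (w.take i) * ((if w'.take j = [] then (1:ℚ) else 0) * A (w.drop i) (w'.drop j))
          + (if w.take i = [] then (1:ℚ) else 0) * (E1 (w'.take j) * A (w.drop i) (w'.drop j)) := by
    intro i _ j _
    rw [Ee_apply]
    ring
  rw [Finset.sum_congr rfl fun i hi => Finset.sum_congr rfl fun j hj => hsplit i hi j hj]
  simp only [Finset.sum_add_distrib]
  congr 1
  · have h1 : ∀ i ∈ range (w.length + 1),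
        ∑ j ∈ range (w'.length + 1),
          E1 (w.take i) * ((if w'.take j = [] then (1:ℚ) else 0) * A (w.drop i) (w'.drop j))
        = E1 (w.take i) * A (w.drop i) w' := by
      intro i _
      rw [← Finset.mul_sum]
      rw [sum_dF_left (fun v => A (w.drop i) v) w']
    rw [Finset.sum_congr rfl h1, sum_E1_left (fun v => A v w') w]
  · have h1 : ∀ i ∈ range (w.length + 1),
        ∑ j ∈ range (w'.length + 1),
          (if w.take i = [] then (1:ℚ) else 0) * (E1 (w'.take j) * A (w.drop i) (w'.drop j))
        = (if w.take i = [] then (1:ℚ) else 0)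
            * (fun v => ∑ j ∈ range (w'.length + 1), E1 (w'.take j) * A v (w'.drop j)) (w.drop i) := by
      intro i _
      rw [Finset.mul_sum]
    rw [Finset.sum_congr rfl h1,
      sum_dF_left (fun v => ∑ j ∈ range (w'.length + 1), E1 (w'.take j) * A v (w'.drop j)) w,
      sum_E1_left (fun v => A w v) w']

end
end P18


namespace P18
noncomputable section

lemma takeWhile_append_false : ∀ (r s : List Bool), false ∈ r →
    (r ++ s).takeWhile id = r.takeWhile id := by
  intro r
  induction r with
  | nil => intro s h; simp at h
  | cons a r ih =>
    intro s h
    cases a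
    · simp
    · have h' : false ∈ r := by simpa using h
      simp only [List.cons_append, List.takeWhile_cons]
      rw [ih s h']

def trail (w : List Bool) : ℕ := (w.reverse.takeWhile id).length

lemma trail_concat_true (v : List Bool) : trail (v ++ [true]) = trail v + 1 := by
  unfold trail
  rw [List.reverse_append]
  simp

lemma trail_cons_true (v : List Bool) (h : false ∈ v) : trail (true :: v) = trail v := by
  unfold trail
  rw [List.reverse_cons, takeWhile_append_false _ _ (by simpa using h)]

lemma comm_vanish_left (u : S2) (H : ∀ w w', (u * Ee) w w' = (Ee * u) w w') :
    ∀ w' w, false ∈ w → u w w' = 0 := by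
  suffices h : ∀ n, ∀ w' : List Bool, w'.length ≤ n → ∀ w, false ∈ w → u w w' = 0 by
    exact fun w' w hw => h w'.length w' le_rfl w hw
  intro n
  induction n using Nat.strong_induction_on with
  | _ n IH =>
    intro w' hw'
    have prev : ∀ v : List Bool, v.length < w'.length → ∀ w, false ∈ w → u w v = 0 := by
      intro v hv
      rcases n with _ | m
      · omega
      · exact IH m (Nat.lt_succ_self m) v (by omega)
    have key : ∀ w, false ∈ w → u w w'
        = (match w.getLast? with | some true => u (true :: w.dropLast) w' | _ => 0) := by
      intro w hw0
      have hne : w ≠ [] := List.ne_nil_of_mem hw0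
      obtain ⟨c, cs, rfl⟩ := List.exists_cons_of_ne_nil hne
      have h := H (true :: c :: cs) w'
      rw [mul_Ee, Ee_mul] at h
      have e1 : (true :: c :: cs).getLast? = (c :: cs).getLast? := List.getLast?_cons_cons
      have e2 : (true :: c :: cs).dropLast = true :: (c :: cs).dropLast := rfl
      have e3 : (match w'.getLast? with
          | some true => u (true :: c :: cs) w'.dropLast | _ => 0) = 0 := by
        rcases hgl : w'.getLast? with _ | b
        · rfl
        · cases b
          · rfl
          · have hlt : w'.dropLast.length < w'.length := by
              have : w' ≠ [] := by
                intro hh; rw [hh] at hgl; simp at hgl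
              rw [List.length_dropLast]
              have := List.length_pos_iff.mpr this
              omega
            exact prev _ hlt _ (List.mem_cons_of_mem _ hw0)
      have e4 : (match w'.head? with
          | some true => u (true :: c :: cs) w'.tail | _ => 0) = 0 := by
        rcases hgl : w'.head? with _ | b
        · rfl
        · cases b
          · rfl
          · have hlt : w'.tail.length < w'.length := by
              have : w' ≠ [] := by
                intro hh; rw [hh] at hgl; simp at hgl
              rw [List.length_tail]
              have := List.length_pos_iff.mpr this
              omega
            exact prev _ hlt _ (List.mem_cons_of_mem _ hw0)
      rw [e1, e2, e3, e4] at h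
      have e5 : (true :: c :: cs).head? = some true := rfl
      rw [e5] at h
      have e6 : (true :: c :: cs).tail = c :: cs := rfl
      rw [e6] at h
      simp only [add_zero] at h
      exact h.symm
    suffices inner : ∀ t, ∀ w, false ∈ w → trail w ≤ t → u w w' = 0 by
      exact fun w hw => inner (trail w) w hw le_rfl
    intro t
    induction t with
    | zero =>
      intro w hw0 ht
      rw [key w hw0]
      rcases List.eq_nil_or_concat w with rfl | ⟨v, b, rfl⟩
      · simp at hw0
      · rw [List.concat_eq_append] at ht ⊢
        cases b
        · rw [List.getLast?_concat]
        · exfalso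
          rw [trail_concat_true] at ht
          omega
    | succ t iht =>
      intro w hw0 ht
      rw [key w hw0]
      rcases List.eq_nil_or_concat w with rfl | ⟨v, b, rfl⟩
      · simp at hw0
      · rw [List.concat_eq_append] at hw0 ht ⊢
        cases b
        · rw [List.getLast?_concat]
        · rw [List.getLast?_concat, List.dropLast_concat]
          have hfv : false ∈ v := by
            rcases List.mem_append.mp hw0 with h | h
            · exact h
            · simp at h
          have htr : trail (true :: v) ≤ t := by
            rw [trail_cons_true v hfv]
            rw [trail_concat_true] at ht
            omega
          exact iht (true :: v) (by simp [hfv]) htr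

def swap2 (u : S2) : S2 := fun a b => u b a

lemma comm_vanish_right (u : S2) (H : ∀ w w', (u * Ee) w w' = (Ee * u) w w') :
    ∀ w w', false ∈ w' → u w w' = 0 := by
  have HS : ∀ w w', (swap2 u * Ee) w w' = (Ee * swap2 u) w w' := by
    intro w w'
    have h := H w' w
    rw [mul_Ee, Ee_mul] at h ⊢
    unfold swap2
    linarith [h]
  intro w w' hw'
  exact comm_vanish_left (swap2 u) HS w w' hw'

end
end P18


namespace P18
noncomputable section

lemma tens_mul_tens (a b c d : SQ) : tens a b * tens c d = tens (a * c) (b * d) := by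
  funext w w'
  rw [S2.mul_apply]
  show _ = (a * c) w * (b * d) w'
  rw [Ser.mul_apply, Ser.mul_apply, Finset.sum_mul_sum]
  refine Finset.sum_congr rfl fun i _ => Finset.sum_congr rfl fun j _ => ?_
  show tens a b (w.take i) (w'.take j) * tens c d (w.drop i) (w'.drop j) = _
  unfold tens
  ring

lemma one2_apply (w w' : List Bool) :
    (1 : S2) w w' = if w = [] ∧ w' = [] then (1:ℚ) else 0 := by
  have h : (1 : S2) w = if w = [] then (1:SQ) else 0 := Ser.one_apply w
  rw [h]
  by_cases hw : w = [] <;> by_cases hw' : w' = [] <;>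
    simp [hw, hw', Ser.one_apply, Ser.zero_apply]

lemma tens_one_one : tens 1 1 = (1 : S2) := by
  funext w w'
  show (1:SQ) w * (1:SQ) w' = (1 : S2) w w'
  rw [Ser.one_apply, Ser.one_apply, one2_apply]
  by_cases hw : w = [] <;> by_cases hw' : w' = [] <;> simp [hw, hw']

end
end P18

namespace P18
noncomputable section

def E1S : SQ := E1

def gS (f fi : SQ) : SQ := fi * (E1S * f)

lemma main (f fi : SQ)
    (hf1 : f [] = 1)
    (hfe1 : ∀ s : ℕ, 1 ≤ s → f (List.replicate s true) = 0)
    (hfi : fi * f = 1)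
    (hffi : f * fi = 1)
    (hDg : D (gS f fi) = tens (gS f fi) 1 + tens 1 (gS f fi)) :
    D f = tens f f := by
  classical
  have happ : ∀ w, (fi * f) w = if w = [] then (1:ℚ) else 0 := by
    intro w
    rw [hfi]
    exact Ser.one_apply w
  have hfi0 : fi [] = 1 := by
    have h := happ []
    rw [Ser.mul_apply] at h
    simp [hf1] at h
    exact h
  have hfirep : ∀ k : ℕ, 1 ≤ k → fi (List.replicate k true) = 0 := by
    intro k hk
    have h := happ (List.replicate k true)
    rw [Ser.mul_apply] at h
    rw [if_neg (by simp; omega)] at h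
    have hs : ∑ i ∈ Finset.range ((List.replicate k true).length + 1),
        fi ((List.replicate k true).take i) * f ((List.replicate k true).drop i)
        = fi (List.replicate k true) := by
      rw [Finset.sum_eq_single k]
      · simp [List.take_replicate, List.drop_replicate, hf1]
      · intro i hi hne
        rw [List.length_replicate, Finset.mem_range, Nat.lt_succ_iff] at hi
        rw [List.drop_replicate, hfe1 (k - i) (by omega), mul_zero]
      · intro hk2
        rw [List.length_replicate] at hk2
        simp at hk2
    rw [hs] at h
    exact h
  have hDrep : ∀ a b : ℕ,
      D f (List.replicate a true) (List.replicate b true) = if a = 0 ∧ b = 0 then 1 else 0 := by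
    intro a b
    by_cases h : a = 0 ∧ b = 0
    · obtain ⟨rfl, rfl⟩ := h
      simp only [List.replicate_zero]
      unfold D
      rw [shuffles_nil_left]
      simp [hf1]
      erw [Multiset.map_singleton, Multiset.sum_singleton]
      exact hf1
    · rw [if_neg h]
      unfold D
      refine Multiset.sum_eq_zero fun z hz => ?_
      obtain ⟨s, hs, rfl⟩ := Multiset.mem_map.mp hz
      have hlen : s.length = a + b := by
        have := length_of_mem_shuffles _ _ s hs
        simpa using this
      have htrue : ∀ z ∈ s, z = true := by
        refine true_of_mem_shuffles _ _ s hs ?_ ?_ <;>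
          exact fun z hz => List.eq_of_mem_replicate hz
      have hrep : s = List.replicate (a + b) true := List.eq_replicate_iff.mpr ⟨hlen, htrue⟩
      rw [hrep]
      exact hfe1 (a + b) (by omega)
  have hgfi : gS f fi * fi = fi * E1S := by
    unfold gS
    rw [mul_assoc fi (E1S * f) fi, mul_assoc E1S f fi, hffi, mul_one]
  have hfg : f * gS f fi = E1S * f := by
    unfold gS
    rw [← mul_assoc, hffi, one_mul]
  have hEe : D E1S = Ee := D_E1
  have hconj : tens fi fi * Ee = (tens (gS f fi) 1 + tens 1 (gS f fi)) * tens fi fi := by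
    have hEe2 : Ee = tens E1S 1 + tens 1 E1S := rfl
    rw [hEe2, mul_add, add_mul, tens_mul_tens, tens_mul_tens, tens_mul_tens, tens_mul_tens,
      hgfi, mul_one, one_mul]
  have hcomm : (D f * tens fi fi) * Ee = Ee * (D f * tens fi fi) := by
    calc (D f * tens fi fi) * Ee = D f * (tens fi fi * Ee) := by rw [mul_assoc]
    _ = D f * ((tens (gS f fi) 1 + tens 1 (gS f fi)) * tens fi fi) := by rw [hconj]
    _ = D f * (D (gS f fi) * tens fi fi) := by rw [← hDg]
    _ = (D f * D (gS f fi)) * tens fi fi := by rw [mul_assoc]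
    _ = D (f * gS f fi) * tens fi fi := by rw [← D_mul]
    _ = D (E1S * f) * tens fi fi := by rw [hfg]
    _ = (D E1S * D f) * tens fi fi := by rw [D_mul]
    _ = (Ee * D f) * tens fi fi := by rw [hEe]
    _ = Ee * (D f * tens fi fi) := by rw [mul_assoc]
  have hcomm' : ∀ w w', ((D f * tens fi fi) * Ee) w w' = (Ee * (D f * tens fi fi)) w w' :=
    fun w w' => by rw [hcomm]
  have hrep : ∀ a b : ℕ, (D f * tens fi fi) (List.replicate a true) (List.replicate b true)
      = if a = 0 ∧ b = 0 then 1 else 0 := by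
    intro a b
    rw [S2.mul_apply]
    simp only [List.length_replicate, List.take_replicate, List.drop_replicate]
    rw [Finset.sum_eq_single 0]
    · rw [Finset.sum_eq_single 0]
      · show D f (List.replicate (0 ⊓ a) true) (List.replicate (0 ⊓ b) true)
            * tens fi fi (List.replicate (a - 0) true) (List.replicate (b - 0) true) = _
        rw [Nat.zero_min, Nat.zero_min, Nat.sub_zero, Nat.sub_zero, hDrep 0 0]
        unfold tens
        by_cases ha : a = 0 <;> by_cases hb : b = 0
        · subst ha; subst hb; simp [hfi0]
        · simp [ha, hb, hfirep b (by omega)]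
        · simp [ha, hb, hfirep a (by omega)]
        · simp [ha, hb, hfirep a (by omega)]
      · intro j hj hne
        rw [Finset.mem_range, Nat.lt_succ_iff] at hj
        have hjb : j ⊓ b = j := Nat.min_eq_left hj
        show D f (List.replicate (0 ⊓ a) true) (List.replicate (j ⊓ b) true) * _ = 0
        rw [Nat.zero_min, hjb, hDrep 0 j, if_neg (by omega), zero_mul]
      · intro h; simp at h
    · intro i hi hne
      rw [Finset.mem_range, Nat.lt_succ_iff] at hi
      have hia : i ⊓ a = i := Nat.min_eq_left hi
      refine Finset.sum_eq_zero fun j _ => ?_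
      show D f (List.replicate (i ⊓ a) true) (List.replicate (j ⊓ b) true) * _ = 0
      rw [hia, hDrep i (j ⊓ b), if_neg (by omega), zero_mul]
    · intro h; simp at h
  have hu : D f * tens fi fi = 1 := by
    funext w w'
    rw [one2_apply]
    by_cases hw : false ∈ w ∨ false ∈ w'
    · have h0 : (D f * tens fi fi) w w' = 0 := by
        rcases hw with hw | hw
        · exact comm_vanish_left _ hcomm' w' w hw
        · exact comm_vanish_right _ hcomm' w w' hw
      rw [h0]
      rcases hw with hw | hw
      · rw [if_neg (by intro h; rw [h.1] at hw; simp at hw)]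
      · rw [if_neg (by intro h; rw [h.2] at hw; simp at hw)]
    · push_neg at hw
      have hw1 : w = List.replicate w.length true := by
        refine List.eq_replicate_iff.mpr ⟨rfl, fun b hb => ?_⟩
        cases b
        · exact absurd hb hw.1
        · rfl
      have hw2 : w' = List.replicate w'.length true := by
        refine List.eq_replicate_iff.mpr ⟨rfl, fun b hb => ?_⟩
        cases b
        · exact absurd hb hw.2
        · rfl
      rw [hw1, hw2, hrep]
      by_cases ha : w.length = 0 <;> by_cases hb : w'.length = 0 <;>
        simp [ha, hb]
  calc D f = D f * 1 := (mul_one _).symm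
  _ = D f * (tens fi fi * tens f f) := by rw [tens_mul_tens, hfi, tens_one_one]
  _ = (D f * tens fi fi) * tens f f := by rw [mul_assoc]
  _ = 1 * tens f f := by rw [hu]
  _ = tens f f := one_mul _

end
end P18

open P18

/-- Converse direction (b ⇒ a of Proposition 7.3): if f[∅] = 1,
f[e₁^s] = 0 for all s ≥ 1, and f⁻¹e₁f is primitive for the shuffle
coproduct, then f is grouplike: Δ_sh(f) = f ⊗ f. Here Δ_sh(f)[w⊗w'] is the
value of f on the shuffle product w ⧢ w'. -/
theorem stmt_18 (f fi : List Bool → ℚ) (hf1 : f [] = 1)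
    (hfe1 : ∀ s : ℕ, 1 ≤ s → f (List.replicate s true) = 0)
    (hfi : ∀ w, conv fi f w = if w = [] then 1 else 0)
    (hfi' : ∀ w, conv f fi w = if w = [] then 1 else 0)
    (hprim : ∀ w w' : List Bool,
      ((shuffles w w').map (conv fi (conv E1 f))).sum =
        (if w' = [] then conv fi (conv E1 f) w else 0) +
          (if w = [] then conv fi (conv E1 f) w' else 0)) :
    ∀ w w' : List Bool, ((shuffles w w').map f).sum = f w * f w' := by
  classical
  have h2 : conv fi (conv E1 f) = gS f fi := by
    rw [conv_eq_mul fi (conv E1 f), conv_eq_mul E1 f]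
    rfl
  have hconv1 : conv fi f = (1 : SQ) := by
    funext w
    rw [hfi w, Ser.one_apply]
  have hconv2 : conv f fi = (1 : SQ) := by
    funext w
    rw [hfi' w, Ser.one_apply]
  have hmfi := (conv_eq_mul fi f).symm.trans hconv1
  have hmffi := (conv_eq_mul f fi).symm.trans hconv2
  have hDg : D (gS f fi) = tens (gS f fi) 1 + tens 1 (gS f fi) := by
    funext w w'
    have h := hprim w w'
    rw [h2] at h
    show D (gS f fi) w w' = tens (gS f fi) 1 w w' + tens 1 (gS f fi) w w'
    unfold D tens
    rw [Ser.one_apply, Ser.one_apply, h]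
    by_cases hw : w = [] <;> by_cases hw' : w' = [] <;> simp [hw, hw']
  have hfinal : D f = tens f f := main f fi hf1 hfe1 hmfi hmffi hDg
  intro w w'
  exact congrFun (congrFun hfinal w) w'
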